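/- Let X be a quandle and give X × X the componentwise quandle structure. Then the diagonal Δ_X = {(x, x) | x ∈ X} is dense in X × X for the pullback closure operator — i.e. for every (a, b) ∈ X × X there exists x ∈ X with (a, b) ∼_{X×X} (x, x) — if and only if X is algebraically connected, i.e. a ∼_X b for all a, b ∈ X. (The c-connected quandles are exactly the algebraically connected quandles.) -/
import Mathlib


open Quandles

/-- The paper's (right-action) quandle operation `x ◃ y`, i.e. Mathlib's `y ◃ x`.
With this convention `x ▷ x = x`, `(x ▷ y) ▷⁻¹ y = x = (x ▷⁻¹ y) ▷ y`, and
both `▷` and `▷⁻¹` are right self-distributive. -/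
def rAct {Q : Type*} [Quandle Q] (x y : Q) : Q := y ◃ x

/-- The paper's (right-action) inverse quandle operation `x ◃⁻¹ y`, i.e. Mathlib's `y ◃⁻¹ x`. -/
def rInvAct {Q : Type*} [Quandle Q] (x y : Q) : Q := y ◃⁻¹ x

local infixl:65 " ▷ " => rAct
local infixl:65 " ▷⁻¹ " => rInvAct

/-- The orbit relation `∼` on a quandle: the equivalence relation generated by the
relation `{(a, b) | ∃ z, a ▷ z = b}`; `x ∼ y` iff `x` and `y` lie in the same
connected component (orbit under the inner automorphism group). -/
def orbitRel (Q : Type*) [Quandle Q] : Q → Q → Prop :=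
  Relation.EqvGen (fun a b => ∃ z : Q, a ▷ z = b)

/-- The componentwise quandle structure on a product of quandles. -/
instance prodQuandle {X Y : Type*} [Quandle X] [Quandle Y] : Quandle (X × Y) where
  act p q := (p.1 ◃ q.1, p.2 ◃ q.2)
  self_distrib := by intro x y z; ext <;> exact Shelf.self_distrib
  invAct p q := (p.1 ◃⁻¹ q.1, p.2 ◃⁻¹ q.2)
  left_inv := by intro x y; ext <;> exact Rack.invAct_act_eq _ _
  right_inv := by intro x y; ext <;> exact Rack.act_invAct_eq _ _
  fix := by intro x; ext <;> exact Quandle.fix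


private theorem orbit_fst {X : Type*} [Quandle X] {p q : X × X}
    (h : orbitRel (X × X) p q) : orbitRel X p.1 q.1 := by
  induction h with
  | rel a b hab => exact Relation.EqvGen.rel _ _ ⟨hab.choose.1, congrArg Prod.fst hab.choose_spec⟩
  | refl a => exact Relation.EqvGen.refl _
  | symm a b _ ih => exact Relation.EqvGen.symm _ _ ih
  | trans a b c _ _ ih1 ih2 => exact Relation.EqvGen.trans _ _ _ ih1 ih2

private theorem orbit_snd {X : Type*} [Quandle X] {p q : X × X}
    (h : orbitRel (X × X) p q) : orbitRel X p.2 q.2 := by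
  induction h with
  | rel a b hab => exact Relation.EqvGen.rel _ _ ⟨hab.choose.2, congrArg Prod.snd hab.choose_spec⟩
  | refl a => exact Relation.EqvGen.refl _
  | symm a b _ ih => exact Relation.EqvGen.symm _ _ ih
  | trans a b c _ _ ih1 ih2 => exact Relation.EqvGen.trans _ _ _ ih1 ih2

private theorem orbit_lift {X : Type*} [Quandle X] (a : X) {b b' : X}
    (h : orbitRel X b b') : orbitRel (X × X) (a, b) (a, b') := by
  induction h with
  | rel x y hxy =>
    obtain ⟨z, hz⟩ := hxy
    refine Relation.EqvGen.rel _ _ ⟨(a, z), ?_⟩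
    show (a ◃ a, z ◃ x) = (a, y)
    rw [Quandle.fix]
    exact congrArg _ hz
  | refl x => exact Relation.EqvGen.refl _
  | symm x y _ ih => exact Relation.EqvGen.symm _ _ ih
  | trans x y z _ _ ih1 ih2 => exact Relation.EqvGen.trans _ _ _ ih1 ih2

/-- A quandle `X` is `c`-connected (the diagonal is dense in `X × X` for the pullback
closure operator) iff it is algebraically connected. -/
theorem cConnected_iff_connected {X : Type*} [Quandle X] :
    (∀ p : X × X, ∃ x : X, orbitRel (X × X) p (x, x)) ↔
      (∀ a b : X, orbitRel X a b) := by
  constructor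
  · intro h a b
    obtain ⟨x, hx⟩ := h (a, b)
    have h1 : orbitRel X a x := orbit_fst hx
    have h2 : orbitRel X b x := orbit_snd hx
    exact Relation.EqvGen.trans _ _ _ h1 (Relation.EqvGen.symm _ _ h2)
  · intro h p
    exact ⟨p.1, by
      have := orbit_lift p.1 (h p.2 p.1)
      simpa using this⟩
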